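/- Let q be a prime power and let t, m be positive integers with t dividing m and t < m. Then the narrow-sense primitive BCH code C_{(q, q^m−1, q^t+1, 1)} has minimum distance exactly d = q^t + 1. -/

import Mathlib

open Polynomial

/-- The narrow-sense primitive BCH code `C_(q,n,δ,1)` of length `n` and designed
distance `δ` with respect to the primitive element `β` of `E`: the `F`-linear
subspace of all `c` with `∑ i, c_i β^{i·j} = 0` for all `1 ≤ j ≤ δ - 1`. -/
def bchCode (F E : Type) [Field F] [Field E] [Algebra F E] (n δ : ℕ) (β : E) :
    Submodule F (Fin n → F) where
  carrier := {c | ∀ j : ℕ, 1 ≤ j → j ≤ δ - 1 →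
    ∑ i : Fin n, algebraMap F E (c i) * β ^ ((i : ℕ) * j) = 0}
  add_mem' := by
    intro a b ha hb j h1 h2
    simp only [Pi.add_apply, map_add, add_mul]
    rw [Finset.sum_add_distrib, ha j h1 h2, hb j h1 h2, add_zero]
  zero_mem' := by
    intro j h1 h2
    simp
  smul_mem' := by
    intro r a ha j h1 h2
    simp only [Pi.smul_apply, smul_eq_mul, map_mul, mul_assoc]
    rw [← Finset.mul_sum, ha j h1 h2, mul_zero]

/-- A (nonzero, linear) code `Γ ⊆ F^n` has minimum distance `d`:
there is a nonzero codeword of Hamming weight `d`, and every nonzero codeword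
has Hamming weight at least `d`. -/
def hasMinDist {F : Type} [Field F] [DecidableEq F] {n : ℕ}
    (Γ : Submodule F (Fin n → F)) (d : ℕ) : Prop :=
  (∃ c ∈ Γ, c ≠ 0 ∧ hammingNorm c = d) ∧ ∀ c ∈ Γ, c ≠ 0 → d ≤ hammingNorm c

lemma digit_mod_le {p : ℕ} {n k : ℕ} {r : ℕ}
    (h : ∀ i < r, k / p ^ i % p ≤ n / p ^ i % p) : k % p ^ r ≤ n % p ^ r := by
  induction r with
  | zero => simp [Nat.mod_one]
  | succ r ih =>
    have hk : k % p ^ (r+1) = k % p ^ r + p ^ r * (k / p ^ r % p) := by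
      rw [pow_succ, Nat.mod_mul]
    have hn : n % p ^ (r+1) = n % p ^ r + p ^ r * (n / p ^ r % p) := by
      rw [pow_succ, Nat.mod_mul]
    have h1 := ih (fun i hi => h i (Nat.lt_succ_of_lt hi))
    have h2 := h r (Nat.lt_succ_self r)
    have h3 := Nat.mul_le_mul_left (p ^ r) h2
    omega

lemma prime_dvd_choose_of_mod_lt {p r n k : ℕ} (hp : p.Prime)
    (h : n % p ^ r < k % p ^ r) : p ∣ n.choose k := by
  haveI : Fact p.Prime := ⟨hp⟩
  have hdig : ∃ i < r, n / p ^ i % p < k / p ^ i % p := by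
    by_contra hc
    push_neg at hc
    exact absurd (digit_mod_le hc) (not_le.2 h)
  obtain ⟨i, hir, hi⟩ := hdig
  have h0 : Nat.choose (n / p ^ i % p) (k / p ^ i % p) = 0 := Nat.choose_eq_zero_of_lt hi
  have hmod := Choose.choose_modEq_choose_mul_prod_range_choose (n := n) (k := k) (p := p) r
  have hprod : (∏ j ∈ Finset.range r, Nat.choose (n / p ^ j % p) (k / p ^ j % p)) = 0 :=
    Finset.prod_eq_zero (Finset.mem_range.2 hir) h0
  rw [hprod, Nat.cast_zero, mul_zero] at hmod
  have : (p : ℤ) ∣ (n.choose k : ℤ) := (Int.modEq_zero_iff_dvd).mp hmod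
  exact_mod_cast this

lemma choose_vanish {p e : ℕ} (hp : p.Prime) {Q : ℕ} (hQ : Q = p ^ e) {i j : ℕ}
    (h1 : 1 ≤ i) (hij : i < j) (hjQ : j ≤ Q) :
    p ∣ Nat.choose (j * (Q - 1)) (i * (Q - 1)) := by
  apply prime_dvd_choose_of_mod_lt hp (r := e)
  rw [← hQ]
  have hQ2 : 2 ≤ Q := by omega
  have key : ∀ a : ℕ, 1 ≤ a → a ≤ Q → a * (Q - 1) % Q = Q - a := by
    intro a ha haQ
    have h : a * (Q - 1) = Q * (a - 1) + (Q - a) := by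
      zify [ha, haQ, show (1:ℕ) ≤ Q from by omega]
      ring
    rw [h, Nat.mul_add_mod, Nat.mod_eq_of_lt (by omega)]
  rw [key j (by omega) hjQ, key i h1 (by omega)]
  omega


/-- Theorem: BCH codes with `δ = q^t + 1`. Let `t ∣ m` with
`t < m`. Then the narrow-sense primitive BCH code `C_(q, q^m - 1, q^t + 1, 1)` has
minimum distance exactly `q^t + 1`. -/
theorem bch_qt_plus_one_minDist
    (q t m : ℕ) (hq : IsPrimePow q) (ht : 0 < t) (htm : t ∣ m) (htm' : t < m)
    (F E : Type) [Field F] [Fintype F] [DecidableEq F] [Field E] [Fintype E] [Algebra F E]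
    (hF : Fintype.card F = q) (hE : Fintype.card E = q ^ m)
    (β : E) (hβ : ∀ x : E, x ≠ 0 → ∃ k : ℕ, x = β ^ k) :
    hasMinDist (bchCode F E (q ^ m - 1) (q ^ t + 1) β) (q ^ t + 1) := by
  obtain ⟨p, e, hpp, he, hqpe⟩ := hq
  have hp : p.Prime := hpp.nat_prime
  haveI : Fact p.Prime := ⟨hp⟩
  have hq2 : 2 ≤ q := by
    rw [← hqpe]; calc 2 ≤ p := hp.two_le
    _ ≤ p ^ e := Nat.le_self_pow (by omega) p
  have hm2 : 2 ≤ m := by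
    rcases htm with ⟨s, rfl⟩
    rcases Nat.lt_or_ge s 2 with hs | hs
    · interval_cases s <;> omega
    · nlinarith
  set n : ℕ := q ^ m - 1 with hn_def
  set Q : ℕ := q ^ t with hQ_def
  have hQ2 : 2 ≤ Q := le_trans hq2 (Nat.le_self_pow (by omega) q)
  have hQltqm : Q < q ^ m := Nat.pow_lt_pow_right (by omega) htm'
  have hqm4 : 4 ≤ q ^ m := by
    calc (4:ℕ) = 2 ^ 2 := rfl
    _ ≤ q ^ m := Nat.pow_le_pow_left (by omega) 2 |>.trans (Nat.pow_le_pow_right (by omega) hm2)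
  have hn1 : n + 1 = q ^ m := by
    have : 1 ≤ q ^ m := by omega
    omega
  have hQn : Q - 1 ∣ n := by
    have h1 : (q ^ t - 1) ∣ (q ^ t) ^ (m / t) - 1 ^ (m / t) := Nat.sub_dvd_pow_sub_pow _ 1 _
    rw [one_pow, ← pow_mul, Nat.mul_div_cancel' htm] at h1
    exact h1
  set s : ℕ := n / (Q - 1) with hs_def
  have hs : s * (Q - 1) = n := Nat.div_mul_cancel hQn
  have hs1 : 1 ≤ s := by
    rcases Nat.eq_zero_or_pos s with h | h
    · exfalso; rw [h, zero_mul] at hs; omega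
    · exact h
  -- characteristic
  have hcard : Fintype.card E = p ^ (e * m) := by rw [hE, ← hqpe, ← pow_mul]
  have hpE : (p : E) = 0 := by
    have h0 : ((Fintype.card E : E)) = 0 := FiniteField.cast_card_eq_zero E
    rw [hcard] at h0
    push_cast at h0
    exact pow_eq_zero_iff (by positivity) |>.mp h0
  haveI hcharE : CharP E p := by
    have hdvd : ringChar E ∣ p := ringChar.dvd hpE
    have hrc : (ringChar E).Prime := CharP.char_is_prime E (ringChar E)
    have : ringChar E = p := (Nat.prime_dvd_prime_iff_eq hrc hp).mp hdvd
    rw [← this]; exact ringChar.charP E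
  have hQp : Q = p ^ (e * t) := by rw [hQ_def, ← hqpe, ← pow_mul]
  have hQE : ((Q : ℕ) : E) = 0 := by
    rw [hQp]; push_cast; rw [hpE]; exact zero_pow (by positivity)
  have hfrob : ∀ x y : E, (x + y) ^ Q = x ^ Q + y ^ Q := by
    intro x y; rw [hQp]; exact add_pow_char_pow x y p (e * t)
  haveI : DecidableEq E := Classical.decEq E
  -- beta
  have hβ0 : β ≠ 0 := by
    intro h
    have hsub : (Finset.univ : Finset E) ⊆ {0, 1} := by
      intro x _
      rcases eq_or_ne x 0 with h0 | h0
      · simp [h0]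
      · obtain ⟨k, hk⟩ := hβ x h0
        rcases Nat.eq_zero_or_pos k with hk0 | hk0
        · simp [hk, hk0]
        · rw [hk, h, zero_pow (by omega)]; simp
    have := Finset.card_le_card hsub
    have h2 : ({0, 1} : Finset E).card ≤ 2 := Finset.card_insert_le _ _ |>.trans (by simp)
    rw [Finset.card_univ, hE] at this
    omega
  set βu : Eˣ := Units.mk0 β hβ0 with hβu_def
  have hβuc : (βu : E) = β := rfl
  have hord : orderOf βu = n := by
    have h1 : ∀ x : Eˣ, x ∈ Subgroup.zpowers βu := by
      intro x
      obtain ⟨k, hk⟩ := hβ (x : E) (Units.ne_zero x)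
      refine ⟨k, ?_⟩
      ext
      simp [hk, hβu_def]
    rw [orderOf_eq_card_of_forall_mem_zpowers h1, Nat.card_eq_fintype_card, Fintype.card_units, hE]
  have hn0 : 0 < n := by omega
  have hβn : β ^ n = 1 := by
    have h := pow_orderOf_eq_one βu
    rw [hord] at h
    simpa [hβu_def] using congrArg Units.val h
  have hβinj : ∀ a b : ℕ, a < n → b < n → β ^ a = β ^ b → a = b := by
    intro a b ha hb hab
    have hu : βu ^ a = βu ^ b := Units.ext (by rw [Units.val_pow_eq_pow_val, Units.val_pow_eq_pow_val]; exact hab)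
    have := pow_eq_pow_iff_modEq.mp hu
    rw [hord] at this
    exact this.eq_of_lt_of_lt ha hb
  have hβpow_mem : ∀ x : E, x ≠ 0 → ∃ k : ℕ, k < n ∧ x = β ^ k := by
    intro x hx
    obtain ⟨k, hk⟩ := hβ x hx
    refine ⟨k % n, Nat.mod_lt _ hn0, ?_⟩
    conv_lhs => rw [hk, ← Nat.div_add_mod k n]
    rw [pow_add, pow_mul, hβn, one_pow, one_mul]
  -- the subfield with Q elements, as an explicit finset
  set Kim : Finset E := (Finset.range (Q - 1)).image (fun i => β ^ (s * i)) with hKim_def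
  have hKiminj : Set.InjOn (fun i => β ^ (s * i)) (Finset.range (Q - 1)) := by
    intro a ha b hb hab
    simp only [Finset.coe_range, Set.mem_Iio] at ha hb
    have ha2 : s * (a + 1) ≤ s * (Q - 1) := Nat.mul_le_mul_left s ha
    have hb2 : s * (b + 1) ≤ s * (Q - 1) := Nat.mul_le_mul_left s hb
    rw [Nat.mul_succ] at ha2 hb2
    have ha' : s * a < n := by omega
    have hb' : s * b < n := by omega
    have := hβinj _ _ ha' hb' hab
    exact Nat.eq_of_mul_eq_mul_left (by omega) this
  have h0Kim : (0 : E) ∉ Kim := by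
    intro h
    rw [hKim_def, Finset.mem_image] at h
    obtain ⟨i, _, hi⟩ := h
    exact pow_ne_zero _ hβ0 hi
  set Kfin : Finset E := insert (0 : E) Kim with hKfin_def
  have hKcard : Kfin.card = Q := by
    rw [hKfin_def, Finset.card_insert_of_notMem h0Kim, hKim_def,
      Finset.card_image_of_injOn hKiminj, Finset.card_range]
    omega
  have hKQpow : ∀ l ∈ Kfin, l ^ Q = l := by
    intro l hl
    rw [hKfin_def, Finset.mem_insert] at hl
    rcases hl with h | h
    · rw [h]; exact zero_pow (by omega)
    · rw [hKim_def, Finset.mem_image] at h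
      obtain ⟨i, _, rfl⟩ := h
      rw [← pow_mul]
      have harith : s * i * Q = s * i + s * (Q - 1) * i := by
        zify [show 1 ≤ Q from by omega]
        ring
      rw [harith, pow_add, pow_mul β (s * (Q - 1)) i, hs, hβn, one_pow, mul_one]
  -- power sums over Kfin
  have hPsum : ∀ k : ℕ, 1 ≤ k → (∑ l ∈ Kfin, l ^ k) = if (Q - 1) ∣ k then (-1 : E) else 0 := by
    intro k hk
    rw [hKfin_def, Finset.sum_insert h0Kim, zero_pow (by omega), zero_add, hKim_def,
      Finset.sum_image hKiminj]
    have hterm : ∀ i, (β ^ (s * i)) ^ k = (β ^ (s * k)) ^ i := by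
      intro i
      rw [← pow_mul, ← pow_mul]
      ring_nf
    simp_rw [hterm]
    by_cases hdvd : (Q - 1) ∣ k
    · obtain ⟨c, rfl⟩ := hdvd
      have hone : β ^ (s * ((Q - 1) * c)) = 1 := by
        rw [show s * ((Q - 1) * c) = s * (Q - 1) * c from by ring, hs, pow_mul, hβn, one_pow]
      rw [hone, if_pos ⟨c, rfl⟩]
      simp only [one_pow, Finset.sum_const, Finset.card_range, nsmul_eq_mul, mul_one]
      have : ((Q - 1 : ℕ) : E) = (Q : E) - 1 := by
        push_cast [Nat.cast_sub (by omega : 1 ≤ Q)]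
        ring
      rw [this, hQE]
      ring
    · rw [if_neg hdvd]
      set r : E := β ^ (s * k) with hr_def
      have hrQ : r ^ (Q - 1) = 1 := by
        rw [hr_def, ← pow_mul, show s * k * (Q - 1) = s * (Q - 1) * k from by ring,
          pow_mul β (s * (Q - 1)) k, hs, hβn, one_pow]
      have hrne : r ≠ 1 := by
        intro h1
        have hu : βu ^ (s * k) = 1 := Units.ext (by simpa [hβu_def] using h1)
        have := orderOf_dvd_of_pow_eq_one hu
        rw [hord] at this
        rw [← hs] at this
        exact hdvd ((Nat.mul_dvd_mul_iff_left (show 0 < s from by omega)).mp this)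
      have hgeo := geom_sum_mul r (Q - 1)
      rw [hrQ, sub_self] at hgeo
      rcases mul_eq_zero.mp hgeo with h | h
      · exact h
      · exact absurd (sub_eq_zero.mp h) hrne
  have hPsum0 : (∑ l ∈ Kfin, l ^ 0) = 0 := by
    simp only [pow_zero, Finset.sum_const, nsmul_eq_mul, mul_one, hKcard]
    exact hQE
  -- choose w outside the subfield
  have hwex : ∃ w : E, w ^ Q ≠ w := by
    by_contra hcon
    push_neg at hcon
    have hβQ : β ^ (Q - 1) = 1 := by
      have h : β ^ (Q - 1) * β = 1 * β := by
        rw [one_mul, ← pow_succ, show Q - 1 + 1 = Q from by omega]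
        exact hcon β
      exact mul_right_cancel₀ hβ0 h
    have hu : βu ^ (Q - 1) = 1 := Units.ext (by simpa [hβu_def] using hβQ)
    have hdvd := orderOf_dvd_of_pow_eq_one hu
    rw [hord] at hdvd
    have := Nat.le_of_dvd (by omega) hdvd
    omega
  obtain ⟨w, hwQ⟩ := hwex
  -- the support set S of the minimum-weight codeword
  have hwsub : w ^ Q - w ≠ 0 := sub_ne_zero.mpr hwQ
  have hlw0 : ∀ l ∈ Kfin, l + w ≠ 0 := by
    intro l hl h0
    apply hwQ
    have h1 : (l + w) ^ Q = l + w ^ Q := by rw [hfrob, hKQpow l hl]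
    rw [h0, zero_pow (by omega : Q ≠ 0)] at h1
    linear_combination -h1 - h0
  set S : Finset E := insert (1 : E) (Kfin.image fun l => (l + w) ^ (Q - 1)) with hS_def
  have hfrobQ1 : ∀ l ∈ Kfin, ((l + w) ^ (Q - 1)) * (l + w) = l + w ^ Q := by
    intro l hl
    rw [← pow_succ, show Q - 1 + 1 = Q from by omega, hfrob, hKQpow l hl]
  have hSinj : Set.InjOn (fun l => (l + w) ^ (Q - 1)) Kfin := by
    intro a ha b hb hab
    simp only at hab
    have h1 : ((a + w) ^ (Q - 1) * (a + w)) * (b + w)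
        = ((b + w) ^ (Q - 1) * (b + w)) * (a + w) := by rw [hab]; ring
    rw [hfrobQ1 a ha, hfrobQ1 b hb] at h1
    have h2 : (a - b) * (w ^ Q - w) = 0 := by linear_combination -h1
    rcases mul_eq_zero.mp h2 with h | h
    · exact sub_eq_zero.mp h
    · exact absurd h hwsub
  have h1S : (1 : E) ∉ Kfin.image fun l => (l + w) ^ (Q - 1) := by
    intro h
    rw [Finset.mem_image] at h
    obtain ⟨l, hl, hlw⟩ := h
    apply hwQ
    have h2 := hfrobQ1 l hl
    rw [hlw, one_mul] at h2
    linear_combination -h2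
  have hScard : S.card = Q + 1 := by
    rw [hS_def, Finset.card_insert_of_notMem h1S, Finset.card_image_of_injOn hSinj, hKcard]
  have hS0 : (0 : E) ∉ S := by
    intro h
    rcases Finset.mem_insert.mp h with h0 | h0
    · exact one_ne_zero h0.symm
    · rw [Finset.mem_image] at h0
      obtain ⟨l, hl, hlw⟩ := h0
      exact hlw0 l hl (pow_eq_zero_iff (by omega : Q - 1 ≠ 0) |>.mp hlw)
  -- power sums over S vanish for 1 ≤ j ≤ Q
  have hSsum : ∀ j : ℕ, 1 ≤ j → j ≤ Q → (∑ x ∈ S, x ^ j) = 0 := by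
    intro j hj1 hjQ
    rw [hS_def, Finset.sum_insert h1S, one_pow, Finset.sum_image hSinj]
    have hT : (∑ l ∈ Kfin, ((l + w) ^ (Q - 1)) ^ j) = -1 := by
      have hrw : ∀ l : E, ((l + w) ^ (Q - 1)) ^ j = (l + w) ^ ((Q - 1) * j) :=
        fun l => by rw [← pow_mul]
      simp_rw [hrw]
      set N : ℕ := (Q - 1) * j with hN_def
      have hNpos : 1 ≤ N := by
        have := Nat.mul_le_mul (show 1 ≤ Q - 1 from by omega) hj1
        simpa using this
      calc (∑ l ∈ Kfin, (l + w) ^ N)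
          = ∑ l ∈ Kfin, ∑ k ∈ Finset.range (N + 1),
              l ^ k * (w ^ (N - k) * (Nat.choose N k : E)) := by
            refine Finset.sum_congr rfl fun l _ => ?_
            rw [add_pow]
            exact Finset.sum_congr rfl fun k _ => by ring
        _ = ∑ k ∈ Finset.range (N + 1),
              (∑ l ∈ Kfin, l ^ k) * (w ^ (N - k) * (Nat.choose N k : E)) := by
            rw [Finset.sum_comm]
            exact Finset.sum_congr rfl fun k _ => (Finset.sum_mul _ _ _).symm
        _ = -1 := by
            rw [Finset.sum_eq_single_of_mem N (Finset.self_mem_range_succ N)]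
            · rw [hPsum N hNpos, if_pos ⟨j, hN_def⟩]
              simp
            · intro k hk hkN
              rcases Nat.eq_zero_or_pos k with hk0 | hk0
              · rw [hk0, hPsum0, zero_mul]
              · by_cases hdvd : (Q - 1) ∣ k
                · obtain ⟨i, rfl⟩ := hdvd
                  have hi1 : 1 ≤ i :=
                    Nat.pos_of_ne_zero (fun h => by simp [h] at hk0)
                  have hij : i < j := by
                    have hkle : (Q - 1) * i < (Q - 1) * j := by
                      have := Finset.mem_range.mp hk
                      omega
                    exact Nat.lt_of_mul_lt_mul_left hkle
                  have hpd := choose_vanish hp hQp hi1 hij hjQ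
                  have hcz : ((Nat.choose N ((Q - 1) * i) : ℕ) : E) = 0 := by
                    rw [hN_def, mul_comm (Q - 1) j, mul_comm (Q - 1) i]
                    exact (CharP.cast_eq_zero_iff E p _).mpr hpd
                  rw [hcz]
                  ring
                · rw [hPsum k (by omega), if_neg hdvd, zero_mul]
    rw [hT]
    ring
  -- the codeword
  set T : Finset (Fin n) := Finset.univ.filter (fun i : Fin n => β ^ (i : ℕ) ∈ S) with hT_def
  set c : Fin n → F := fun i => if β ^ (i : ℕ) ∈ S then 1 else 0 with hc_def
  have himage : T.image (fun i : Fin n => β ^ (i : ℕ)) = S := by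
    apply Finset.Subset.antisymm
    · intro x hx
      rw [Finset.mem_image] at hx
      obtain ⟨i, hi, rfl⟩ := hx
      exact (Finset.mem_filter.mp hi).2
    · intro x hx
      obtain ⟨k, hk, hxk⟩ := hβpow_mem x (fun h => hS0 (h ▸ hx))
      refine Finset.mem_image.mpr ⟨⟨k, hk⟩, Finset.mem_filter.mpr ⟨Finset.mem_univ _, ?_⟩, hxk.symm⟩
      rw [← hxk]
      exact hx
  have hTinj : Set.InjOn (fun i : Fin n => β ^ (i : ℕ)) T := by
    intro a _ b _ hab
    exact Fin.ext (hβinj a b a.isLt b.isLt hab)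
  have hTcard : T.card = Q + 1 := by
    rw [← hScard, ← himage, Finset.card_image_of_injOn hTinj]
  constructor
  · -- existence of a weight Q+1 codeword
    refine ⟨c, ?_, ?_, ?_⟩
    · -- membership in the code
      intro j hj1 hj2
      have hj2' : j ≤ Q := by
        simpa using hj2
      have hsum : (∑ i : Fin n, algebraMap F E (c i) * β ^ ((i : ℕ) * j))
          = ∑ i ∈ T, β ^ ((i : ℕ) * j) := by
        rw [hT_def, Finset.sum_filter]
        refine Finset.sum_congr rfl fun i _ => ?_
        rw [hc_def]
        by_cases h : β ^ (i : ℕ) ∈ S <;> simp [h]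
      have h2 : (∑ x ∈ S, x ^ j) = ∑ i ∈ T, β ^ ((i : ℕ) * j) := by
        rw [← himage, Finset.sum_image hTinj]
        exact Finset.sum_congr rfl fun i _ => by rw [← pow_mul]
      rw [hsum, ← h2]
      exact hSsum j hj1 hj2'
    · -- c ≠ 0
      intro h0
      have hmem : β ^ ((⟨0, hn0⟩ : Fin n) : ℕ) ∈ S := by
        show β ^ (0 : ℕ) ∈ S
        rw [pow_zero, hS_def]
        exact Finset.mem_insert_self 1 _
      have h1 : c ⟨0, hn0⟩ = 1 := by
        simp only [hc_def]
        exact if_pos hmem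
      rw [h0] at h1
      exact (one_ne_zero : (1:F) ≠ 0) (by simpa using h1.symm)
    · -- weight
      have hnorm : hammingNorm c = T.card := by
        apply congrArg Finset.card
        ext i
        simp only [hT_def, Finset.mem_filter, Finset.mem_univ, true_and, hc_def]
        by_cases h : β ^ (i : ℕ) ∈ S <;> simp [h]
      rw [hnorm, hTcard]
  · -- lower bound (BCH bound)
    intro c hc hc0
    by_contra hlt
    push_neg at hlt
    have hcc : ∀ j : ℕ, 1 ≤ j → j ≤ Q →
        (∑ i : Fin n, algebraMap F E (c i) * β ^ ((i : ℕ) * j)) = 0 := by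
      intro j h1 h2
      exact hc j h1 (by simpa using h2)
    set T2 : Finset (Fin n) := Finset.univ.filter (fun i : Fin n => c i ≠ 0) with hT2
    have hham : hammingNorm c = T2.card := rfl
    have hne : ∃ i, c i ≠ 0 := Function.ne_iff.mp hc0
    have hk1 : 1 ≤ T2.card := by
      obtain ⟨i, hi⟩ := hne
      exact Finset.card_pos.mpr ⟨i, Finset.mem_filter.mpr ⟨Finset.mem_univ _, hi⟩⟩
    have hkQ : T2.card ≤ Q := by
      rw [← hham]; omega
    set k : ℕ := T2.card with hk_def
    set g : {x // x ∈ T2} ≃ Fin k := T2.equivFin with hg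
    set x : Fin k → E := fun a => β ^ (((g.symm a : Fin n)) : ℕ) with hx
    have hxne : ∀ a, x a ≠ 0 := fun a => pow_ne_zero _ hβ0
    have hxinj : Function.Injective x := by
      intro a b hab
      apply g.symm.injective
      exact Subtype.ext (Fin.ext (hβinj _ _ (Fin.isLt _) (Fin.isLt _) hab))
    set M : Matrix (Fin k) (Fin k) E := (Matrix.diagonal x * Matrix.vandermonde x).transpose with hM
    have hMab : ∀ a b, M a b = x b ^ ((a : ℕ) + 1) := by
      intro a b
      rw [hM, Matrix.transpose_apply, Matrix.mul_apply]
      rw [Finset.sum_eq_single_of_mem b (Finset.mem_univ b)]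
      · rw [Matrix.diagonal_apply_eq, Matrix.vandermonde_apply, pow_succ']
      · intro c _ hcb
        rw [Matrix.diagonal_apply_ne' _ hcb, zero_mul]
    set v : Fin k → E := fun b => algebraMap F E (c (g.symm b)) with hv
    have hMv : M.mulVec v = 0 := by
      funext a
      have hj := hcc ((a : ℕ) + 1) (by omega) (by have := a.isLt; omega)
      have hrestrict : (∑ i ∈ T2, algebraMap F E (c i) * β ^ ((i : ℕ) * ((a : ℕ) + 1)))
          = ∑ i : Fin n, algebraMap F E (c i) * β ^ ((i : ℕ) * ((a : ℕ) + 1)) := by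
        rw [hT2]
        apply Finset.sum_filter_of_ne
        intro i _ hne0 hci
        apply hne0
        rw [hci, map_zero, zero_mul]
      have hsum2 : (∑ b : Fin k, x b ^ ((a : ℕ) + 1) * v b)
          = ∑ i ∈ T2, algebraMap F E (c i) * β ^ ((i : ℕ) * ((a : ℕ) + 1)) := by
        rw [← Finset.sum_coe_sort T2]
        rw [← Equiv.sum_comp g.symm
          (fun y : {i // i ∈ T2} => algebraMap F E (c y) * β ^ (((y : Fin n) : ℕ) * ((a : ℕ) + 1)))]
        refine Finset.sum_congr rfl fun b _ => ?_
        rw [hx, hv, ← pow_mul]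
        ring
      show (∑ b : Fin k, M a b * v b) = 0
      calc (∑ b : Fin k, M a b * v b) = ∑ b : Fin k, x b ^ ((a : ℕ) + 1) * v b :=
            Finset.sum_congr rfl fun b _ => by rw [hMab]
        _ = 0 := by rw [hsum2, hrestrict, hj]
    have hdet : M.det ≠ 0 := by
      rw [hM, Matrix.det_transpose, Matrix.det_mul, Matrix.det_diagonal,
        Matrix.det_vandermonde]
      apply mul_ne_zero
      · exact Finset.prod_ne_zero_iff.mpr fun a _ => hxne a
      · refine Finset.prod_ne_zero_iff.mpr fun a _ => ?_
        refine Finset.prod_ne_zero_iff.mpr fun b hb => ?_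
        rw [Finset.mem_Ioi] at hb
        exact sub_ne_zero.mpr fun h => (Nat.lt_irrefl _ (by rw [hxinj h] at hb; exact hb))
    have hMinj : Function.Injective M.mulVec :=
      Matrix.mulVec_injective_iff_isUnit.mpr
        ((Matrix.isUnit_iff_isUnit_det M).mpr (isUnit_iff_ne_zero.mpr hdet))
    have hv0 : v = 0 := by
      apply hMinj
      rw [hMv, Matrix.mulVec_zero]
    obtain ⟨i0, hi0⟩ := hne
    have hi0T : i0 ∈ T2 := Finset.mem_filter.mpr ⟨Finset.mem_univ _, hi0⟩
    have hcontr := congrFun hv0 (g ⟨i0, hi0T⟩)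
    rw [hv] at hcontr
    simp only [Equiv.symm_apply_apply, Pi.zero_apply] at hcontr
    exact hi0 ((_root_.map_eq_zero (algebraMap F E)).mp hcontr)
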